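/- Let n ≥ 2 and let f be an admissible functional on triples of permutations of {1,…,n}. Let π be a permutation of {1,…,n}, let π̄ = w₀∘π be its complement, and suppose 1 ≤ j < k ≤ n are positions with π̄(j) > π̄(k); let σ be π̄ with the entries in positions j and k swapped, and suppose ℓ(σ) = ℓ(π̄) − 1. If i is an index with either k ≤ i or i+1 ≤ j (the swapped positions both lie on one side of the gap between i and i+1), then f(π, s_i, σ) = 0. -/

import Mathlib

/- Background definitions: descent-cycling for Schubert problems on S_n,
   with permutations modeled as `Equiv.Perm (Fin n)` (0-indexed positions:
   position i here corresponds to position i+1 in 1-indexed notation). -/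

namespace DC

/-- A triple of permutations of {1,…,n}. -/
abbrev Triple (n : ℕ) := Equiv.Perm (Fin n) × Equiv.Perm (Fin n) × Equiv.Perm (Fin n)

/-- The length ℓ(π) = number of inversions of π. -/
def len {n : ℕ} (π : Equiv.Perm (Fin n)) : ℕ :=
  (Finset.univ.filter (fun p : Fin n × Fin n => p.1 < p.2 ∧ π p.2 < π p.1)).card

/-- π has a descent at (0-indexed) position i, i.e. π(i) > π(i+1). -/
def Descent {n : ℕ} (π : Equiv.Perm (Fin n)) (i : ℕ) : Prop :=
  ∃ h : i + 1 < n, π ⟨i + 1, h⟩ < π ⟨i, Nat.lt_of_succ_lt h⟩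

/-- π has an ascent at (0-indexed) position i, i.e. π(i) < π(i+1). -/
def Ascent {n : ℕ} (π : Equiv.Perm (Fin n)) (i : ℕ) : Prop :=
  ∃ h : i + 1 < n, π ⟨i, Nat.lt_of_succ_lt h⟩ < π ⟨i + 1, h⟩

/-- The adjacent transposition s_i swapping (0-indexed) i and i+1. -/
def s (n i : ℕ) : Equiv.Perm (Fin n) :=
  if h : i + 1 < n then Equiv.swap ⟨i, Nat.lt_of_succ_lt h⟩ ⟨i + 1, h⟩ else 1

/-- The longest permutation w₀ : m ↦ n+1−m (0-indexed: m ↦ n−1−m). -/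
def w0 (n : ℕ) : Equiv.Perm (Fin n) := Fin.revPerm

/-- The complement π̄ = w₀ ∘ π of a permutation. -/
def compl {n : ℕ} (π : Equiv.Perm (Fin n)) : Equiv.Perm (Fin n) := w0 n * π

/-- A Schubert problem: a triple of permutations whose lengths sum to n(n−1)/2. -/
def IsSchubert {n : ℕ} (P : Triple n) : Prop :=
  len P.1 + len P.2.1 + len P.2.2 = n.choose 2

/-- A Schubert problem is dc-trivial if at some position all three permutations ascend. -/
def DCTrivial {n : ℕ} (P : Triple n) : Prop :=
  IsSchubert P ∧ ∃ i : ℕ, Ascent P.1 i ∧ Ascent P.2.1 i ∧ Ascent P.2.2 i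

/-- The three Schubert problems obtainable from (u,v,w) by adding a descent at i. -/
def MoveSet {n : ℕ} (u v w : Equiv.Perm (Fin n)) (i : ℕ) : Set (Triple n) :=
  {(u * s n i, v, w), (u, v * s n i, w), (u, v, w * s n i)}

/-- P and P′ are joined by a single descent-cycling move. -/
def DCMove {n : ℕ} (P P' : Triple n) : Prop :=
  ∃ (u v w : Equiv.Perm (Fin n)) (i : ℕ),
    len u + len v + len w + 1 = n.choose 2 ∧
    Ascent u i ∧ Ascent v i ∧ Ascent w i ∧
    P ∈ MoveSet u v w i ∧ P' ∈ MoveSet u v w i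

/-- dc-equivalence: the reflexive–transitive closure of descent-cycling moves. -/
def DCEquiv {n : ℕ} : Triple n → Triple n → Prop := Relation.ReflTransGen DCMove

/-- An admissible functional on triples of permutations: constant on dc-equivalence
classes of Schubert problems, zero on dc-trivial Schubert problems, one on (id,id,w₀). -/
def Admissible {n : ℕ} (f : Triple n → ℤ) : Prop :=
  (∀ P P' : Triple n, IsSchubert P → IsSchubert P' → DCEquiv P P' → f P = f P') ∧
  (∀ P : Triple n, DCTrivial P → f P = 0) ∧
  f (1, 1, w0 n) = 1

end DC


namespace DC

variable {n : ℕ}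

lemma s_eq {m : ℕ} (h : m + 1 < n) :
    s n m = Equiv.swap ⟨m, Nat.lt_of_succ_lt h⟩ ⟨m + 1, h⟩ := dif_pos h

lemma s_mul_self' (m : ℕ) : s n m * s n m = 1 := by
  unfold s; split
  · exact Equiv.swap_mul_self _ _
  · exact one_mul 1

set_option maxRecDepth 10000 in
lemma swap_lt_swap_iff {m : ℕ} (h : m + 1 < n) {x y : Fin n}
    (h1 : ¬((x : ℕ) = m ∧ (y : ℕ) = m + 1)) (h2 : ¬((x : ℕ) = m + 1 ∧ (y : ℕ) = m)) :
    Equiv.swap ⟨m, Nat.lt_of_succ_lt h⟩ ⟨m + 1, h⟩ x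
      < Equiv.swap ⟨m, Nat.lt_of_succ_lt h⟩ ⟨m + 1, h⟩ y ↔ x < y := by
  simp only [Equiv.swap_apply_def]
  split_ifs <;> simp only [Fin.ext_iff, Fin.lt_def] at * <;> omega

lemma len_one : len (1 : Equiv.Perm (Fin n)) = 0 := by
  unfold len
  rw [Finset.card_eq_zero, Finset.filter_eq_empty_iff]
  rintro p - ⟨h1, h2⟩
  simp only [Equiv.Perm.one_apply] at h2
  exact absurd h1 (not_lt.mpr h2.le)

lemma len_mul_s_of_ascent (π : Equiv.Perm (Fin n)) {m : ℕ} (hm : m + 1 < n)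
    (ha : π ⟨m, Nat.lt_of_succ_lt hm⟩ < π ⟨m + 1, hm⟩) :
    len (π * s n m) = len π + 1 := by
  set a : Fin n := ⟨m, Nat.lt_of_succ_lt hm⟩ with ha_def
  set b : Fin n := ⟨m + 1, hm⟩ with hb_def
  have hs : s n m = Equiv.swap a b := s_eq hm
  have step1 : len (π * s n m) =
      (Finset.univ.filter (fun q : Fin n × Fin n =>
        Equiv.swap a b q.1 < Equiv.swap a b q.2 ∧ π q.2 < π q.1)).card := by
    unfold len
    rw [hs]
    apply Finset.card_equiv ((Equiv.swap a b).prodCongr (Equiv.swap a b))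
    intro q
    simp only [Finset.mem_filter, Finset.mem_univ, true_and, Equiv.prodCongr_apply,
      Prod.map, Equiv.Perm.mul_apply, Equiv.swap_apply_self]
    exact Finset.mem_filter.trans ⟨fun h => h.2, fun h => ⟨Finset.mem_univ _, h⟩⟩
  have hmem : ∀ q : Fin n × Fin n,
      (Equiv.swap a b q.1 < Equiv.swap a b q.2 ∧ π q.2 < π q.1) ↔
      (q = (b, a) ∨ (q.1 < q.2 ∧ π q.2 < π q.1)) := by
    intro q
    constructor
    · rintro ⟨h1, h2⟩
      by_cases hq1 : (q.1 : ℕ) = m + 1 ∧ (q.2 : ℕ) = m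
      · exact Or.inl (Prod.ext (Fin.ext hq1.1) (Fin.ext hq1.2))
      · by_cases hq2 : (q.1 : ℕ) = m ∧ (q.2 : ℕ) = m + 1
        · exfalso
          rw [show q.1 = a from Fin.ext hq2.1, show q.2 = b from Fin.ext hq2.2] at h2
          exact absurd ha (not_lt.mpr h2.le)
        · exact Or.inr ⟨(swap_lt_swap_iff hm hq2 hq1).mp h1, h2⟩
    · rintro (rfl | ⟨h1, h2⟩)
      · refine ⟨?_, ha⟩
        show Equiv.swap a b b < Equiv.swap a b a
        rw [Equiv.swap_apply_right, Equiv.swap_apply_left]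
        exact Fin.mk_lt_mk.mpr (Nat.lt_succ_self m)
      · refine ⟨?_, h2⟩
        have hq2 : ¬((q.1 : ℕ) = m ∧ (q.2 : ℕ) = m + 1) := by
          rintro ⟨e1, e2⟩
          rw [show q.1 = a from Fin.ext e1, show q.2 = b from Fin.ext e2] at h2
          exact absurd ha (not_lt.mpr h2.le)
        have hq1 : ¬((q.1 : ℕ) = m + 1 ∧ (q.2 : ℕ) = m) := by
          rintro ⟨e1, e2⟩
          rw [Fin.lt_def] at h1; omega
        exact (swap_lt_swap_iff hm hq2 hq1).mpr h1
  have step2 : (Finset.univ.filter (fun q : Fin n × Fin n =>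
        Equiv.swap a b q.1 < Equiv.swap a b q.2 ∧ π q.2 < π q.1))
      = insert (b, a) (Finset.univ.filter
          (fun q : Fin n × Fin n => q.1 < q.2 ∧ π q.2 < π q.1)) := by
    ext q
    simp only [Finset.mem_insert, Finset.mem_filter, Finset.mem_univ, true_and]
    exact hmem q
  rw [step1, step2, Finset.card_insert_of_notMem]
  · rfl
  · simp only [Finset.mem_filter, Finset.mem_univ, true_and, not_and]
    intro h1
    exfalso
    rw [Fin.lt_def] at h1
    simp only [hb_def, ha_def] at h1
    omega

lemma len_mul_s_of_descent (π : Equiv.Perm (Fin n)) {m : ℕ} (hm : m + 1 < n)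
    (hd : π ⟨m + 1, hm⟩ < π ⟨m, Nat.lt_of_succ_lt hm⟩) :
    len π = len (π * s n m) + 1 := by
  have key : (π * s n m) ⟨m, Nat.lt_of_succ_lt hm⟩ < (π * s n m) ⟨m + 1, hm⟩ := by
    rw [s_eq hm]
    simp only [Equiv.Perm.mul_apply, Equiv.swap_apply_left, Equiv.swap_apply_right]
    exact hd
  have := len_mul_s_of_ascent (π * s n m) hm key
  rw [mul_assoc, s_mul_self', mul_one] at this
  omega

lemma compl_apply (π : Equiv.Perm (Fin n)) (x : Fin n) :
    compl π x = Fin.rev (π x) := rfl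

lemma card_lt_pairs : (Finset.univ.filter
    (fun q : Fin n × Fin n => q.1 < q.2)).card = n.choose 2 := by
  rw [Finset.card_filter, ← Finset.univ_product_univ, Finset.sum_product]
  have inner : ∀ x : Fin n,
      (∑ y : Fin n, if x < y then 1 else 0) = n - 1 - (x : ℕ) := by
    intro x
    rw [← Finset.card_filter]
    have : Finset.univ.filter (fun y : Fin n => x < y) = Finset.Ioi x := by
      ext y; simp [Finset.mem_Ioi]
    rw [this, Fin.card_Ioi]
  rw [Finset.sum_congr rfl (fun x _ => inner x)]
  rw [Fin.sum_univ_eq_sum_range (fun i => n - 1 - i) n]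
  rw [show (∑ i ∈ Finset.range n, (n - 1 - i)) = ∑ i ∈ Finset.range n, i from
    Finset.sum_range_reflect (fun i => i) n]
  rw [Finset.sum_range_id, Nat.choose_two_right]

lemma len_add_len_compl (π : Equiv.Perm (Fin n)) :
    len π + len (compl π) = n.choose 2 := by
  have hc : ∀ q : Fin n × Fin n, compl π q.2 < compl π q.1 ↔ π q.1 < π q.2 := by
    intro q
    rw [compl_apply, compl_apply]
    exact Fin.rev_lt_rev
  unfold len
  have e1 : (Finset.univ.filter (fun q : Fin n × Fin n => q.1 < q.2 ∧ π q.2 < π q.1))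
      = (Finset.univ.filter (fun q : Fin n × Fin n => q.1 < q.2)).filter
          (fun q => π q.2 < π q.1) := by
    rw [Finset.filter_filter]
  have e2 : (Finset.univ.filter
        (fun q : Fin n × Fin n => q.1 < q.2 ∧ compl π q.2 < compl π q.1))
      = (Finset.univ.filter (fun q : Fin n × Fin n => q.1 < q.2)).filter
          (fun q => ¬ π q.2 < π q.1) := by
    rw [Finset.filter_filter]
    apply Finset.filter_congr
    intro q _
    constructor
    · rintro ⟨hlt, hc2⟩
      refine ⟨hlt, ?_⟩
      rw [hc q] at hc2
      exact not_lt.mpr hc2.le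
    · rintro ⟨hlt, hc2⟩
      refine ⟨hlt, ?_⟩
      rw [hc q]
      rcases lt_or_eq_of_le (not_lt.mp hc2) with h | h
      · exact h
      · exact absurd (π.injective h) (ne_of_lt hlt)
  rw [e1, e2, Finset.card_filter_add_card_filter_not, card_lt_pairs]

lemma len_s {i : ℕ} (hi : i + 1 < n) : len (s n i) = 1 := by
  have h1 : (1 : Equiv.Perm (Fin n)) ⟨i, Nat.lt_of_succ_lt hi⟩ < (1 : Equiv.Perm (Fin n)) ⟨i + 1, hi⟩ := by
    simp only [Equiv.Perm.one_apply]
    exact Fin.mk_lt_mk.mpr (Nat.lt_succ_self i)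
  have := len_mul_s_of_ascent 1 hi h1
  rw [one_mul, len_one] at this
  omega

set_option maxRecDepth 10000 in
lemma ascent_s {i m : ℕ} (hi : i + 1 < n) (hm : m + 1 < n) (hne : m ≠ i) :
    Ascent (s n i) m := by
  refine ⟨hm, ?_⟩
  rw [s_eq hi]
  simp only [Equiv.swap_apply_def]
  split_ifs <;> simp only [Fin.ext_iff, Fin.lt_def] at * <;> omega

lemma exists_ascent (ρ : Equiv.Perm (Fin n)) (j k : Fin n) (hjk : j < k)
    (h : ρ j < ρ k) : ∃ m : ℕ, (j : ℕ) ≤ m ∧ m < (k : ℕ) ∧ Ascent ρ m := by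
  suffices H : ∀ kv (hk : kv < n) (j : Fin n), (j : ℕ) < kv → ρ j < ρ ⟨kv, hk⟩ →
      ∃ m : ℕ, (j : ℕ) ≤ m ∧ m < kv ∧ Ascent ρ m by
    have := H (k : ℕ) k.isLt j hjk (by rwa [Fin.eta])
    exact this
  intro kv
  induction kv with
  | zero => intro hk j hj; omega
  | succ K ih =>
    intro hk j hj hlt
    by_cases hca : ρ ⟨K, Nat.lt_of_succ_lt hk⟩ < ρ ⟨K + 1, hk⟩
    · exact ⟨K, by omega, by omega, hk, hca⟩
    · have hjK : (j : ℕ) ≤ K := by omega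
      have hjK' : (j : ℕ) ≠ K := by
        intro e
        have : j = ⟨K, Nat.lt_of_succ_lt hk⟩ := Fin.ext e
        rw [this] at hlt
        exact hca hlt
      have hlt' : ρ j < ρ ⟨K, Nat.lt_of_succ_lt hk⟩ :=
        lt_of_lt_of_le hlt (not_lt.mp hca)
      obtain ⟨m, h1, h2, h3⟩ := ih (Nat.lt_of_succ_lt hk) j (by omega) hlt'
      exact ⟨m, h1, by omega, h3⟩

lemma ascent_or_descent (π : Equiv.Perm (Fin n)) {m : ℕ} (hm : m + 1 < n) :
    Ascent π m ∨ Descent π m := by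
  have hne : π ⟨m, Nat.lt_of_succ_lt hm⟩ ≠ π ⟨m + 1, hm⟩ := by
    intro e
    have := π.injective e
    simp only [Fin.mk.injEq] at this
    omega
  rcases lt_or_gt_of_ne hne with h | h
  · exact Or.inl ⟨hm, h⟩
  · exact Or.inr ⟨hm, h⟩

end DC


namespace DC

lemma descent_iff_compl_ascent {n : ℕ} (π : Equiv.Perm (Fin n)) {m : ℕ} (hm : m + 1 < n) :
    π ⟨m + 1, hm⟩ < π ⟨m, Nat.lt_of_succ_lt hm⟩ ↔
    compl π ⟨m, Nat.lt_of_succ_lt hm⟩ < compl π ⟨m + 1, hm⟩ := by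
  rw [compl_apply, compl_apply]
  exact Fin.rev_lt_rev.symm

lemma key_lemma {n : ℕ} (f : Triple n → ℤ) (hf : Admissible f) :
    ∀ N : ℕ, ∀ (π : Equiv.Perm (Fin n)) (j k : Fin n), len π ≤ N → j < k →
      compl π k < compl π j → ∀ σ : Equiv.Perm (Fin n), σ = compl π * Equiv.swap j k →
      len σ + 1 = len (compl π) → ∀ i : ℕ, i + 1 < n → ((k : ℕ) ≤ i ∨ i + 1 ≤ (j : ℕ)) →
      f (π, s n i, σ) = 0 := by
  intro N
  induction N using Nat.strong_induction_on with
  | _ N ih =>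
  intro π j k hlenN hjk hdesc σ hσ hlen i hi hside
  have hσj : σ j = compl π k := by
    rw [hσ]; simp only [Equiv.Perm.mul_apply, Equiv.swap_apply_left]
  have hσk : σ k = compl π j := by
    rw [hσ]; simp only [Equiv.Perm.mul_apply, Equiv.swap_apply_right]
  have hσjk : σ j < σ k := by rw [hσj, hσk]; exact hdesc
  obtain ⟨m, hjm, hmk, hm1, hasc⟩ := exists_ascent σ j k hjk hσjk
  have hmi : m ≠ i := by rcases hside with h | h <;> omega
  have hschP : IsSchubert (π, s n i, σ) := by
    show len π + len (s n i) + len σ = n.choose 2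
    rw [len_s hi]
    have := len_add_len_compl π
    omega
  rcases ascent_or_descent π hm1 with hA | hD
  · exact hf.2.1 _ ⟨hschP, m, hA, ascent_s hi hm1 hmi, ⟨hm1, hasc⟩⟩
  · obtain ⟨hm1', hDlt⟩ := hD
    set a : Fin n := ⟨m, Nat.lt_of_succ_lt hm1⟩ with ha_def
    set b : Fin n := ⟨m + 1, hm1⟩ with hb_def
    have hDlt' : π b < π a := hDlt
    have hπ'len : len π = len (π * s n m) + 1 := len_mul_s_of_descent π hm1 hDlt'
    have hσ'len : len (σ * s n m) = len σ + 1 := len_mul_s_of_ascent σ hm1 hasc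
    have hascπ' : Ascent (π * s n m) m := by
      refine ⟨hm1, ?_⟩
      rw [s_eq hm1]
      simp only [Equiv.Perm.mul_apply, Equiv.swap_apply_left, Equiv.swap_apply_right]
      exact hDlt'
    have hπss : π * s n m * s n m = π := by rw [mul_assoc, s_mul_self', mul_one]
    have hmove : DCMove (π, s n i, σ) (π * s n m, s n i, σ * s n m) := by
      refine ⟨π * s n m, s n i, σ, m, ?_, hascπ', ascent_s hi hm1 hmi, ⟨hm1, hasc⟩, ?_, ?_⟩
      · rw [len_s hi]
        have := len_add_len_compl π
        omega
      · simp only [MoveSet, Set.mem_insert_iff, Set.mem_singleton_iff]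
        exact Or.inl (by rw [hπss])
      · simp only [MoveSet, Set.mem_insert_iff, Set.mem_singleton_iff]
        tauto
    have hschP' : IsSchubert (π * s n m, s n i, σ * s n m) := by
      show len (π * s n m) + len (s n i) + len (σ * s n m) = n.choose 2
      rw [len_s hi]
      have := len_add_len_compl π
      omega
    have hfeq : f (π, s n i, σ) = f (π * s n m, s n i, σ * s n m) :=
      hf.1 _ _ hschP hschP' (Relation.ReflTransGen.single hmove)
    rw [hfeq]
    have hcomplasc : compl π a < compl π b := (descent_iff_compl_ascent π hm1).mp hDlt'
    have hnotedge : ¬((j : ℕ) = m ∧ (k : ℕ) = m + 1) := by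
      rintro ⟨e1, e2⟩
      have ej : j = a := Fin.ext e1
      have ek : k = b := Fin.ext e2
      rw [ej, ek] at hdesc
      exact absurd hdesc (not_lt.mpr hcomplasc.le)
    have hnotedge2 : ¬((j : ℕ) = m + 1 ∧ (k : ℕ) = m) := by omega
    have hsnm : s n m = Equiv.swap a b := s_eq hm1
    have hj'k' : Equiv.swap a b j < Equiv.swap a b k :=
      (swap_lt_swap_iff hm1 hnotedge hnotedge2).mpr hjk
    have hcompl' : compl (π * s n m) = compl π * s n m := by
      unfold compl; rw [mul_assoc]
    have happ : ∀ x : Fin n, compl (π * s n m) (Equiv.swap a b x) = compl π x := by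
      intro x
      rw [hcompl', hsnm]
      simp only [Equiv.Perm.mul_apply, Equiv.swap_apply_self]
    have hlenc' : len (compl (π * s n m)) = len (compl π) + 1 := by
      rw [hcompl']
      exact len_mul_s_of_ascent (compl π) hm1 hcomplasc
    have hσ'eq : σ * s n m =
        compl (π * s n m) * Equiv.swap (Equiv.swap a b j) (Equiv.swap a b k) := by
      rw [hcompl', hσ, hsnm, Equiv.swap_apply_apply (Equiv.swap a b) j k, Equiv.swap_inv]
      ext x
      simp only [Equiv.Perm.mul_apply, Equiv.swap_apply_self]
    have hdesc' : compl (π * s n m) (Equiv.swap a b k) < compl (π * s n m) (Equiv.swap a b j) := by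
      rw [happ, happ]; exact hdesc
    have hlen' : len (σ * s n m) + 1 = len (compl (π * s n m)) := by omega
    have hside' : ((Equiv.swap a b k : Fin n) : ℕ) ≤ i ∨
        i + 1 ≤ ((Equiv.swap a b j : Fin n) : ℕ) := by
      rcases hside with hL | hR
      · left
        have hka : k ≠ a := by
          intro e; rw [e] at hmk; simp only [ha_def] at hmk; omega
        by_cases hkb : k = b
        · rw [hkb, Equiv.swap_apply_right]
          show m ≤ i
          omega
        · rw [Equiv.swap_apply_of_ne_of_ne hka hkb]; exact hL
      · right
        have hjb : j ≠ b := by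
          intro e
          have : (j : ℕ) = m + 1 := by rw [e]
          omega
        by_cases hja : j = a
        · rw [hja, Equiv.swap_apply_left]
          show i + 1 ≤ m + 1
          have : (j : ℕ) = m := by rw [hja]
          omega
        · rw [Equiv.swap_apply_of_ne_of_ne hja hjb]; exact hR
    exact ih (len (π * s n m)) (by omega) (π * s n m) (Equiv.swap a b j) (Equiv.swap a b k)
      le_rfl hj'k' hdesc' (σ * s n m) hσ'eq hlen' i hi hside'

end DC

/-- Monk's rule, non-straddling case: if σ is obtained from π̄ = w₀∘π by switching the
entries in positions j < k, decreasing the length by exactly one, and the swapped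
positions both lie on one side of the gap between i and i+1 (k ≤ i or i+1 ≤ j),
then f(π, s_i, σ) = 0 for any admissible functional f. -/
theorem statement1 {n : ℕ} (hn : 2 ≤ n) (f : DC.Triple n → ℤ) (hf : DC.Admissible f)
    (π : Equiv.Perm (Fin n)) (j k : Fin n) (hjk : j < k)
    (hdesc : DC.compl π k < DC.compl π j)
    (σ : Equiv.Perm (Fin n)) (hσ : σ = DC.compl π * Equiv.swap j k)
    (hlen : DC.len σ + 1 = DC.len (DC.compl π))
    (i : ℕ) (hi : i + 1 < n) (hside : (k : ℕ) ≤ i ∨ i + 1 ≤ (j : ℕ)) :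
    f (π, DC.s n i, σ) = 0 :=
  DC.key_lemma f hf (DC.len π) π j k le_rfl hjk hdesc σ hσ hlen i hi hside
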